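/- arXiv:2407.11623 — 4 statements merged into one kernel-verified Lean document; each statement's English description precedes it below -/
import Mathlib

section
/- For n ∈ ℕ, the element π_n := Σ_{Y ⊆ {2,…,n+1}} (-1)^{|Y|} [f_Y] is an idempotent in the monoid algebra k[FA(n+1, n+1)] of the monoid of all set maps from {1,…,n+1} to itself, where f_Y sends every element of Y to 1 and fixes all other elements. -/
open Finset

/-- The element `π_n = Σ_{Y ⊆ {2,…,n+1}} (-1)^{|Y|} [f_Y]` of the monoid algebra
`k[FA(n+1,n+1)]` of the monoid of all self-maps of a set with `n+1` elements, where `f_Y`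
sends every element of `Y` to the first element and fixes all other elements.
Here the set `{1,…,n+1}` is modelled by `Fin (n+1)`, whose first element is `0`. -/
noncomputable def piN (k : Type*) [Field k] (n : ℕ) :
    MonoidAlgebra k (Function.End (Fin (n + 1))) :=
  ∑ Y ∈ ((Finset.univ : Finset (Fin (n + 1))).erase 0).powerset,
    (-1 : k) ^ Y.card •
      MonoidAlgebra.single (fun i => if i ∈ Y then (0 : Fin (n + 1)) else i) 1

noncomputable def fE (n : ℕ) (Y : Finset (Fin (n + 1))) : Function.End (Fin (n + 1)) :=
  fun i => if i ∈ Y then (0 : Fin (n + 1)) else i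

lemma fE_mul (n : ℕ) (Y Z : Finset (Fin (n + 1))) :
    fE n Y * fE n Z = fE n (Y ∪ Z) := by
  funext x
  show fE n Y (fE n Z x) = fE n (Y ∪ Z) x
  simp only [fE, mem_union]
  by_cases hz : x ∈ Z
  · simp [hz]
  · by_cases hy : x ∈ Y <;> simp [hz, hy]

lemma fE_empty (n : ℕ) : fE n ∅ = 1 := by
  funext x
  show (if x ∈ (∅ : Finset (Fin (n + 1))) then (0 : Fin (n + 1)) else x) = x
  simp

noncomputable def Qs (k : Type*) [Field k] (n : ℕ) (s : Finset (Fin (n + 1))) :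
    MonoidAlgebra k (Function.End (Fin (n + 1))) :=
  ∑ Y ∈ s.powerset, (-1 : k) ^ Y.card • MonoidAlgebra.single (fE n Y) 1

lemma single_comm_Q (k : Type*) [Field k] (n : ℕ) (Z : Finset (Fin (n + 1)))
    (s : Finset (Fin (n + 1))) :
    Commute (MonoidAlgebra.single (fE n Z) (1 : k)) (Qs k n s) := by
  unfold Qs Commute SemiconjBy
  rw [Finset.mul_sum, Finset.sum_mul]
  refine Finset.sum_congr rfl fun Y _ => ?_
  rw [mul_smul_comm, smul_mul_assoc, MonoidAlgebra.single_mul_single,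
    MonoidAlgebra.single_mul_single, fE_mul, fE_mul, union_comm]

lemma Q_insert (k : Type*) [Field k] (n : ℕ) (a : Fin (n + 1)) (s : Finset (Fin (n + 1)))
    (ha : a ∉ s) :
    Qs k n (insert a s) = Qs k n s - MonoidAlgebra.single (fE n {a}) 1 * Qs k n s := by
  have hdisj : Disjoint s.powerset (s.powerset.image (insert a)) := by
    rw [Finset.disjoint_left]
    intro Y hY hY'
    simp only [mem_image, mem_powerset] at hY hY'
    obtain ⟨Z, hZ, rfl⟩ := hY'
    exact ha (hY (mem_insert_self a Z))
  have hinj : ∀ Y ∈ s.powerset, ∀ Z ∈ s.powerset, insert a Y = insert a Z → Y = Z := by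
    intro Y hY Z hZ h
    rw [mem_powerset] at hY hZ
    have haY : a ∉ Y := fun h' => ha (hY h')
    have haZ : a ∉ Z := fun h' => ha (hZ h')
    rw [← Finset.erase_insert haY, ← Finset.erase_insert haZ, h]
  rw [Qs, Finset.powerset_insert, Finset.sum_union hdisj, Finset.sum_image hinj]
  have key : ∀ Y ∈ s.powerset,
      (-1 : k) ^ (insert a Y).card • MonoidAlgebra.single (fE n (insert a Y)) (1 : k)
        = -((-1 : k) ^ Y.card •
            (MonoidAlgebra.single (fE n {a}) (1 : k) * MonoidAlgebra.single (fE n Y) 1)) := by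
    intro Y hY
    rw [mem_powerset] at hY
    have haY : a ∉ Y := fun h' => ha (hY h')
    rw [MonoidAlgebra.single_mul_single, fE_mul, mul_one,
      Finset.card_insert_of_notMem haY, pow_succ, ← Finset.insert_eq, mul_neg_one, neg_smul]
  rw [Finset.sum_congr rfl key, Finset.sum_neg_distrib, Qs, Finset.mul_sum, sub_eq_add_neg]
  congr 2
  refine Finset.sum_congr rfl fun Y _ => ?_
  rw [mul_smul_comm]

lemma Q_sq (k : Type*) [Field k] (n : ℕ) (s : Finset (Fin (n + 1))) :
    Qs k n s * Qs k n s = Qs k n s := by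
  induction s using Finset.induction_on with
  | empty =>
      have : Qs k n ∅ = 1 := by
        rw [Qs, Finset.powerset_empty, Finset.sum_singleton, Finset.card_empty, pow_zero,
          one_smul, fE_empty, MonoidAlgebra.one_def]
      rw [this, one_mul]
  | insert a s ha ih =>
      rw [Q_insert k n a s ha]
      set E := MonoidAlgebra.single (fE n {a}) (1 : k) with hE
      set Q := Qs k n s with hQ
      have hEE : E * E = E := by
        rw [hE, MonoidAlgebra.single_mul_single, fE_mul, union_self, mul_one]
      have hcomm : Commute E Q := single_comm_Q k n {a} s
      have h1 : Q - E * Q = (1 - E) * Q := by rw [sub_mul, one_mul]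
      rw [h1]
      have hc2 : Commute (1 - E) Q := (Commute.one_left Q).sub_left hcomm
      calc (1 - E) * Q * ((1 - E) * Q)
          = (1 - E) * (Q * (1 - E)) * Q := by noncomm_ring
        _ = (1 - E) * ((1 - E) * Q) * Q := by rw [hc2.eq]
        _ = ((1 - E) * (1 - E)) * (Q * Q) := by noncomm_ring
        _ = (1 - E) * Q := by
            rw [ih]
            congr 1
            rw [sub_mul, one_mul, mul_sub, mul_one, hEE]
            abel

/-- `π_n` is an idempotent in the monoid algebra `k[FA(n+1,n+1)]`. -/
theorem stmt2 (k : Type*) [Field k] (n : ℕ) : piN k n * piN k n = piN k n := by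
  have h : piN k n = Qs k n ((Finset.univ : Finset (Fin (n + 1))).erase 0) := rfl
  rw [h]
  exact Q_sq k n _
end

section
/- Let k be a field and for finite sets S, T let FA(S,T) denote all functions S → T, FI(S,T) the injections, and FS(S,T) the surjections. Then the map k[FI(S,U)] ⊗ k[FS(T,S)] → k[FA(T,U)] induced by composition, summed over isomorphism classes of S (equivalently, factoring each map through its image), induces an isomorphism of k-vector spaces ⊕_{n∈ℕ} k[FI({1,…,n},U)] ⊗_{k[S_n]} k[FS(T,{1,…,n})] ≅ k[FA(T,U)], for all finite sets T, U. -/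
open Finsupp

/-- Index type: triples `(n, i, s)` of a natural number `n`, an injection
`i : Fin n ↪ U` and a surjection `s : T ↠ Fin n`. Its linearization models
`⊕ₙ k[FI({1,…,n},U)] ⊗ k[FS(T,{1,…,n})]`. -/
def FISPairs (T U : Type*) : Type _ :=
  Σ n : ℕ, (Fin n ↪ U) × {s : T → Fin n // Function.Surjective s}

/-- The linear map `⊕ₙ k[FI({1,…,n},U)] ⊗ k[FS(T,{1,…,n})] → k[FA(T,U)]` induced by
composition `(i, s) ↦ i ∘ s`. -/
noncomputable def composePairs (k : Type*) [Field k] (T U : Type*) :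
    (FISPairs T U →₀ k) →ₗ[k] ((T → U) →₀ k) :=
  Finsupp.lift ((T → U) →₀ k) k (FISPairs T U)
    (fun p => Finsupp.single (fun t => p.2.1 (p.2.2.1 t)) 1)

/-- The relations defining the tensor product over the group algebras `k[S_n]`:
`(i ∘ σ) ⊗ s = i ⊗ (σ ∘ s)` for `σ ∈ S_n`. -/
def tensorRels (k : Type*) [Field k] (T U : Type*) : Set (FISPairs T U →₀ k) :=
  { v | ∃ (n : ℕ) (σ : Equiv.Perm (Fin n)) (i : Fin n ↪ U)
          (s : {s : T → Fin n // Function.Surjective s}),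
        v = Finsupp.single (⟨n, σ.toEmbedding.trans i, s⟩ : FISPairs T U) 1
          - Finsupp.single (⟨n, i, ⟨σ ∘ s.1, σ.surjective.comp s.2⟩⟩ : FISPairs T U) 1 }


namespace Stmt5Aux

variable {k : Type*} [Field k] {T U : Type*}

/-- Composition of a pair. -/
def comp (p : FISPairs T U) : T → U := fun t => p.2.1 (p.2.2.1 t)

/-- Canonical factorization of `f` through its range. -/
noncomputable def canon [Fintype T] (f : T → U) : FISPairs T U :=
  letI : Fintype (Set.range f) := (Set.finite_range f).fintype
  let e : Set.range f ≃ Fin (Fintype.card (Set.range f)) := Fintype.equivFin _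
  ⟨Fintype.card (Set.range f),
    ⟨fun x => (e.symm x : U), fun a b h => e.symm.injective (Subtype.ext h)⟩,
    ⟨fun t => e ⟨f t, Set.mem_range_self t⟩, by
      intro x
      obtain ⟨y, hy⟩ := (e.symm x).2
      refine ⟨y, ?_⟩
      have h2 : (⟨f y, Set.mem_range_self y⟩ : Set.range f) = e.symm x := Subtype.ext hy
      show e ⟨f y, Set.mem_range_self y⟩ = x
      rw [h2, e.apply_symm_apply]⟩⟩

theorem comp_canon [Fintype T] (f : T → U) : comp (canon f) = f := by
  funext t
  simp [comp, canon]
  exact congrArg Subtype.val (Equiv.symm_apply_apply _ _)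

theorem composePairs_single (p : FISPairs T U) :
    composePairs k T U (Finsupp.single p 1) = Finsupp.single (comp p) 1 := by
  simp only [composePairs, Finsupp.lift_apply, Finsupp.sum_single_index, zero_smul, one_smul]
  rfl

theorem single_sub_mem (p q : FISPairs T U) (h : comp p = comp q) :
    Finsupp.single p (1 : k) - Finsupp.single q 1
      ∈ Submodule.span k (tensorRels k T U) := by
  obtain ⟨n, i, s⟩ := p
  obtain ⟨m, i', s'⟩ := q
  have h' : ∀ t, i (s.1 t) = i' (s'.1 t) := fun t => congrFun h t
  have hr : Set.range (⇑i) = Set.range (⇑i') := by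
    rw [← s.2.range_comp (⇑i), ← s'.2.range_comp (⇑i')]
    exact congrArg Set.range (funext h')
  let b : Fin n ≃ Set.range (⇑i) := Equiv.ofInjective _ i.injective
  let b' : Fin m ≃ Set.range (⇑i') := Equiv.ofInjective _ i'.injective
  have hnm : n = m := Fin.equiv_iff_eq.mp ⟨b.trans ((Equiv.setCongr hr).trans b'.symm)⟩
  subst hnm
  set σ : Equiv.Perm (Fin n) := b.trans ((Equiv.setCongr hr).trans b'.symm) with hσ
  have hσi : ∀ x, i' (σ x) = i x := by
    intro x
    have h1 : (b' (σ x) : U) = i x := by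
      simp [hσ, b]
    simpa [b'] using h1
  have hσs : ∀ t, σ (s.1 t) = s'.1 t := by
    intro t
    apply i'.injective
    rw [hσi, h']
  apply Submodule.subset_span
  refine ⟨n, σ, i', s, ?_⟩
  have hi : σ.toEmbedding.trans i' = i := Function.Embedding.ext fun x => hσi x
  have hs : (⟨⇑σ ∘ s.1, σ.surjective.comp s.2⟩ : {s : T → Fin n // Function.Surjective s})
      = s' := Subtype.ext (funext hσs)
  rw [hi, hs]
  rfl

end Stmt5Aux

open Stmt5Aux in
/-- Factoring each map through its image induces an isomorphism of `k`-vector spaces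
`⊕ₙ k[FI({1,…,n},U)] ⊗_{k[Sₙ]} k[FS(T,{1,…,n})] ≅ k[FA(T,U)]`: the composition map is
surjective, and its kernel is exactly the span of the `S_n`-tensor relations, so that the
induced map on the quotient (the direct sum of the tensor products over the group algebras)
is an isomorphism. -/
theorem stmt5 (k : Type*) [Field k] (T U : Type*) [Fintype T] [Fintype U] :
    Function.Surjective (composePairs k T U) ∧
      LinearMap.ker (composePairs k T U) = Submodule.span k (tensorRels k T U) := by
  classical
  set N := Submodule.span k (tensorRels k T U) with hN
  let φ : ((T → U) →₀ k) →ₗ[k] ((FISPairs T U →₀ k) ⧸ N) :=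
    Finsupp.lift _ k _ (fun f => N.mkQ (Finsupp.single (canon f) 1))
  have hsec : ∀ f : T → U, composePairs k T U (Finsupp.single (canon f) 1)
      = Finsupp.single f 1 := by
    intro f
    rw [composePairs_single, comp_canon]
  have hφ : ∀ x, φ (composePairs k T U x) = N.mkQ x := by
    intro x
    induction x using Finsupp.induction_linear with
    | zero => simp
    | add a b ha hb => simp [map_add, ha, hb]
    | single p c =>
      have h1 : composePairs k T U (Finsupp.single p c)
          = c • Finsupp.single (comp p) 1 := by
        rw [← Finsupp.smul_single_one p c, map_smul, composePairs_single]
      have h2 : φ (Finsupp.single (comp p) 1) = N.mkQ (Finsupp.single (canon (comp p)) 1) := by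
        simp [φ]
      have h3 : N.mkQ (Finsupp.single (canon (comp p)) 1) = N.mkQ (Finsupp.single p 1) := by
        rw [Submodule.mkQ_apply, Submodule.mkQ_apply, Submodule.Quotient.eq]
        exact single_sub_mem _ _ (by rw [comp_canon])
      rw [h1, map_smul, h2, h3, ← Finsupp.smul_single_one p c, map_smul]
  constructor
  · intro y
    refine ⟨Finsupp.lift _ k _ (fun f : T → U => Finsupp.single (canon f) (1:k)) y, ?_⟩
    induction y using Finsupp.induction_linear with
    | zero => simp
    | add a b ha hb => simp only [map_add, ha, hb]
    | single f c =>
      rw [Finsupp.lift_apply, Finsupp.sum_single_index (by simp), map_smul, hsec,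
        Finsupp.smul_single, smul_eq_mul, mul_one]
  · apply le_antisymm
    · intro x hx
      have hx0 : composePairs k T U x = 0 := hx
      have h4 := hφ x
      rw [hx0, map_zero] at h4
      rw [← Submodule.Quotient.mk_eq_zero N, ← Submodule.mkQ_apply, ← h4]
    · rw [hN, Submodule.span_le]
      rintro v ⟨n, σ, i, s, rfl⟩
      simp only [SetLike.mem_coe, LinearMap.mem_ker, map_sub]
      refine (map_sub (composePairs k T U)
        (Finsupp.single (⟨n, σ.toEmbedding.trans i, s⟩ : FISPairs T U) 1)
        (Finsupp.single (⟨n, i, ⟨σ ∘ s.1, σ.surjective.comp s.2⟩⟩ : FISPairs T U) 1)).trans ?_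
      refine (congrArg₂ (· - ·) (composePairs_single _) (composePairs_single _)).trans ?_
      have hc : comp (⟨n, σ.toEmbedding.trans i, s⟩ : FISPairs T U)
          = comp (⟨n, i, ⟨σ ∘ s.1, σ.surjective.comp s.2⟩⟩ : FISPairs T U) := rfl
      rw [hc, sub_self]
end

section
/- Let k be a field, t, s ∈ ℕ with s ≤ t. Viewing k[FI({1,…,s},{1,…,t})] (the linearization of the set of injections) as a (S_t, S_s)-bimodule via post- and pre-composition, the coinvariants sgn_t ⊗_{k[S_t]} k[FI({1,…,s},{1,…,t})] are isomorphic as right k[S_s]-modules to sgn_s if s ∈ {t-1, t}, and are zero if s < t-1. -/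
/-- The sign-twisted coinvariants `sgn_t ⊗_{k[S_t]} k[FI({1,…,s},{1,…,t})]`, modelled as the
quotient of the linearization of the set of injections `Fin s ↪ Fin t` by the relations
`[σ ∘ i] = sign(σ) · [i]` for `σ ∈ S_t`. -/
noncomputable def sgnCoinvRels (k : Type*) [Field k] (s t : ℕ) : Submodule k ((Fin s ↪ Fin t) →₀ k) :=
  Submodule.span k
    {v : (Fin s ↪ Fin t) →₀ k | ∃ (σ : Equiv.Perm (Fin t)) (i : Fin s ↪ Fin t),
      v = Finsupp.single (i.trans σ.toEmbedding) 1
        - ((Equiv.Perm.sign σ : ℤ) : k) • Finsupp.single i 1}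

open Equiv Function

/-- Any two embeddings `Fin s ↪ Fin t` differ by a permutation of `Fin t`. -/
lemma exists_perm_comp {s t : ℕ} (i j : Fin s ↪ Fin t) :
    ∃ σ : Equiv.Perm (Fin t), ∀ a, σ (j a) = i a := by
  classical
  have hcard : Fintype.card (↥((Set.range ⇑j)ᶜ))
      = Fintype.card (↥((Set.range ⇑i)ᶜ)) := by
    rw [Fintype.card_compl_set, Fintype.card_compl_set,
      Set.card_range_of_injective j.injective, Set.card_range_of_injective i.injective]
  let e1 : ↥(Set.range j) ≃ ↥(Set.range i) :=
    (Equiv.ofInjective j j.injective).symm.trans (Equiv.ofInjective i i.injective)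
  let e2 : (↥((Set.range ⇑j)ᶜ)) ≃ (↥((Set.range ⇑i)ᶜ)) :=
    Fintype.equivOfCardEq hcard
  refine ⟨(Equiv.Set.sumCompl (Set.range ⇑j)).symm.trans
      ((e1.sumCongr e2).trans (Equiv.Set.sumCompl (Set.range ⇑i))), fun a => ?_⟩
  have hmem : j a ∈ Set.range ⇑j := ⟨a, rfl⟩
  simp only [Equiv.trans_apply]
  rw [Equiv.Set.sumCompl_symm_apply_of_mem hmem]
  have h1 : e1 ⟨j a, hmem⟩ = ⟨i a, ⟨a, rfl⟩⟩ := by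
    simp only [e1, Equiv.trans_apply]
    have : (⟨j a, hmem⟩ : ↥(Set.range j)) = Equiv.ofInjective j j.injective a := rfl
    rw [this, Equiv.symm_apply_apply]
    rfl
  simp [h1]

/-- If `t ≤ s + 1`, two permutations of `Fin t` agreeing on the range of an embedding
`Fin s ↪ Fin t` are equal. -/
lemma perm_eq_of_comp_eq {s t : ℕ} (hts : t ≤ s + 1) {σ τ : Equiv.Perm (Fin t)}
    (i : Fin s ↪ Fin t) (h : ∀ a, σ (i a) = τ (i a)) : σ = τ := by
  classical
  have key : ∀ x, (τ⁻¹ * σ) x = x := by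
    intro x
    by_contra hx
    set π := τ⁻¹ * σ with hπ
    have hfix : ∀ a, π (i a) = i a := by
      intro a
      simp [hπ, Equiv.Perm.mul_apply, h a]
    have hx1 : ∀ a, i a ≠ x := by
      intro a ha
      exact hx (by rw [← ha, hfix a])
    have hx2 : ∀ a, i a ≠ π x := by
      intro a ha
      have h1 : π (π x) = π x := by rw [← ha, hfix a, ha]
      exact hx (π.injective h1)
    have hne : x ≠ π x := fun h => hx h.symm
    have hsub : ({x, π x} : Finset (Fin t)) ⊆ (Finset.univ.image i)ᶜ := by
      intro y hy
      simp only [Finset.mem_insert, Finset.mem_singleton] at hy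
      rw [Finset.mem_compl, Finset.mem_image]
      rintro ⟨a, -, ha⟩
      rcases hy with rfl | rfl
      · exact hx1 a ha
      · exact hx2 a ha
    have hcard2 : ({x, π x} : Finset (Fin t)).card = 2 := by
      rw [Finset.card_insert_of_notMem (by simpa using hne), Finset.card_singleton]
    have hle := Finset.card_le_card hsub
    simp only [hcard2, Finset.card_compl, Finset.card_image_of_injective _ i.injective,
      Finset.card_univ, Fintype.card_fin] at hle
    omega
  have h1 : τ⁻¹ * σ = 1 := Equiv.ext key
  calc σ = τ * (τ⁻¹ * σ) := by group
    _ = τ := by rw [h1, mul_one]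

/-- A chosen permutation of `Fin t` carrying the standard embedding to `i`. -/
noncomputable def extPerm {s t : ℕ} (hst : s ≤ t) (i : Fin s ↪ Fin t) : Equiv.Perm (Fin t) :=
  (exists_perm_comp i (Fin.castLEEmb hst)).choose

lemma extPerm_spec {s t : ℕ} (hst : s ≤ t) (i : Fin s ↪ Fin t) :
    ∀ a, extPerm hst i (Fin.castLEEmb hst a) = i a :=
  (exists_perm_comp i (Fin.castLEEmb hst)).choose_spec

/-- For `s ≤ t`, the coinvariants `sgn_t ⊗_{k[S_t]} k[FI({1,…,s},{1,…,t})]` vanish when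
`s < t - 1`, and when `s ∈ {t-1, t}` they are isomorphic, as right `k[S_s]`-modules, to the
sign representation `sgn_s`: the right action of `τ ∈ S_s` (by precomposition) corresponds
to multiplication by `sign τ`. -/
theorem stmt8 (k : Type*) [Field k] [CharZero k] (s t : ℕ) (hst : s ≤ t) :
    (s + 1 < t → Subsingleton (((Fin s ↪ Fin t) →₀ k) ⧸ sgnCoinvRels k s t)) ∧
      ((s = t - 1 ∨ s = t) →
        ∃ e : (((Fin s ↪ Fin t) →₀ k) ⧸ sgnCoinvRels k s t) ≃ₗ[k] k,
          ∀ (τ : Equiv.Perm (Fin s)) (i : Fin s ↪ Fin t),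
            e (Submodule.Quotient.mk (Finsupp.single (τ.toEmbedding.trans i) 1))
              = ((Equiv.Perm.sign τ : ℤ) : k)
                * e (Submodule.Quotient.mk (Finsupp.single i 1))) := by
  classical
  set e₀ : Fin s ↪ Fin t := Fin.castLEEmb hst with he₀
  -- the coefficient function
  set c : (Fin s ↪ Fin t) → k :=
    fun i => ((Equiv.Perm.sign (extPerm hst i) : ℤ) : k) with hc
  -- each generator [i] is congruent to c i • [e₀] modulo the relations
  have hgen : ∀ i : Fin s ↪ Fin t,
      Finsupp.single i 1 - c i • Finsupp.single e₀ 1 ∈ sgnCoinvRels k s t := by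
    intro i
    apply Submodule.subset_span
    refine ⟨extPerm hst i, e₀, ?_⟩
    have hti : e₀.trans (extPerm hst i).toEmbedding = i := by
      refine Function.Embedding.ext fun a => ?_
      simp only [Function.Embedding.trans_apply, Equiv.coe_toEmbedding, he₀]
      exact extPerm_spec hst i a
    rw [hti, hc]
  constructor
  · -- vanishing case
    intro hlt
    rw [Submodule.Quotient.subsingleton_iff]
    -- there is an odd permutation fixing the standard embedding pointwise
    have hx : (s : ℕ) < t := by omega
    have hy : (s + 1 : ℕ) < t := hlt
    set x : Fin t := ⟨s, hx⟩
    set y : Fin t := ⟨s + 1, hy⟩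
    have hxy : x ≠ y := by simp [x, y, Fin.ext_iff]
    have hswap : e₀.trans (Equiv.swap x y).toEmbedding = e₀ := by
      refine Function.Embedding.ext fun a => ?_
      simp only [Function.Embedding.trans_apply, Equiv.coe_toEmbedding]
      apply Equiv.swap_apply_of_ne_of_ne
      · intro h
        have h2 : (a : ℕ) = s := congrArg Fin.val h
        omega
      · intro h
        have h2 : (a : ℕ) = s + 1 := congrArg Fin.val h
        omega
    have hmem : (2 : k) • Finsupp.single e₀ (1 : k) ∈ sgnCoinvRels k s t := by
      have key : (2 : k) • Finsupp.single e₀ (1 : k)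
          = Finsupp.single (e₀.trans (Equiv.swap x y).toEmbedding) (1 : k)
            - ((Equiv.Perm.sign (Equiv.swap x y) : ℤ) : k) • Finsupp.single e₀ 1 := by
        rw [hswap, Equiv.Perm.sign_swap hxy]
        simp only [Units.val_neg, Units.val_one, Int.cast_neg, Int.cast_one, neg_smul,
          one_smul, sub_neg_eq_add, two_smul]
      rw [key]
      exact Submodule.subset_span ⟨Equiv.swap x y, e₀, rfl⟩
    have he₀mem : Finsupp.single e₀ (1 : k) ∈ sgnCoinvRels k s t := by
      have h2 : (2 : k) ≠ 0 := two_ne_zero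
      have := Submodule.smul_mem (sgnCoinvRels k s t) (2⁻¹ : k) hmem
      rwa [smul_smul, inv_mul_cancel₀ h2, one_smul] at this
    have hall : ∀ i : Fin s ↪ Fin t, Finsupp.single i (1 : k) ∈ sgnCoinvRels k s t := by
      intro i
      have := Submodule.add_mem (sgnCoinvRels k s t) (hgen i)
        (Submodule.smul_mem _ (c i) he₀mem)
      rwa [sub_add_cancel] at this
    have hall2 : ∀ v : (Fin s ↪ Fin t) →₀ k, v ∈ sgnCoinvRels k s t := by
      intro v
      induction v using Finsupp.induction with
      | zero => exact Submodule.zero_mem _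
      | single_add a b f _ _ ih =>
        refine Submodule.add_mem _ ?_ ih
        have hb : Finsupp.single a b = b • Finsupp.single a (1 : k) := by
          rw [Finsupp.smul_single, smul_eq_mul, mul_one]
        rw [hb]
        exact Submodule.smul_mem _ b (hall a)
    exact eq_top_iff.mpr fun v _ => hall2 v
  · -- isomorphism case
    intro hcase
    have hts : t ≤ s + 1 := by omega
    -- uniqueness of extensions: the key multiplicativity
    have hext_mul : ∀ (σ : Equiv.Perm (Fin t)) (i : Fin s ↪ Fin t),
        extPerm hst (i.trans σ.toEmbedding) = σ * extPerm hst i := by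
      intro σ i
      apply perm_eq_of_comp_eq hts e₀
      intro a
      rw [he₀, extPerm_spec hst (i.trans σ.toEmbedding) a, Equiv.Perm.mul_apply,
        extPerm_spec hst i a]
      simp
    have hc_mul : ∀ (σ : Equiv.Perm (Fin t)) (i : Fin s ↪ Fin t),
        c (i.trans σ.toEmbedding) = ((Equiv.Perm.sign σ : ℤ) : k) * c i := by
      intro σ i
      simp only [hc, hext_mul σ i, map_mul]
      push_cast
      ring
    have hc_e₀ : c e₀ = 1 := by
      have h1 : extPerm hst e₀ = 1 := by
        apply perm_eq_of_comp_eq hts e₀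
        intro a
        rw [he₀, extPerm_spec hst (Fin.castLEEmb hst) a]
        rfl
      simp [hc, h1]
    -- the linear map to k
    set φ : ((Fin s ↪ Fin t) →₀ k) →ₗ[k] k := Finsupp.linearCombination k c with hφ
    have hφ_single : ∀ i : Fin s ↪ Fin t, φ (Finsupp.single i 1) = c i := by
      intro i
      simp [hφ, Finsupp.linearCombination_single]
    have hker : sgnCoinvRels k s t ≤ LinearMap.ker φ := by
      rw [sgnCoinvRels, Submodule.span_le]
      rintro v ⟨σ, i, rfl⟩
      simp only [SetLike.mem_coe, LinearMap.mem_ker, map_sub, map_smul, hφ_single,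
        smul_eq_mul]
      rw [hc_mul σ i]
      ring
    set e' : (((Fin s ↪ Fin t) →₀ k) ⧸ sgnCoinvRels k s t) →ₗ[k] k :=
      (sgnCoinvRels k s t).liftQ φ hker with he'
    have he'_single : ∀ i : Fin s ↪ Fin t,
        e' (Submodule.Quotient.mk (Finsupp.single i 1)) = c i := by
      intro i
      rw [he', Submodule.liftQ_apply, hφ_single]
    set v : ((Fin s ↪ Fin t) →₀ k) ⧸ sgnCoinvRels k s t :=
      Submodule.Quotient.mk (Finsupp.single e₀ 1) with hv
    have hmk_single : ∀ i : Fin s ↪ Fin t,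
        (Submodule.Quotient.mk (Finsupp.single i 1) :
          ((Fin s ↪ Fin t) →₀ k) ⧸ sgnCoinvRels k s t) = c i • v := by
      intro i
      rw [hv, ← Submodule.Quotient.mk_smul, Submodule.Quotient.eq]
      exact hgen i
    have hspan : ∀ x : ((Fin s ↪ Fin t) →₀ k) ⧸ sgnCoinvRels k s t, ∃ a : k, x = a • v := by
      intro x
      obtain ⟨y, rfl⟩ := Submodule.Quotient.mk_surjective _ x
      induction y using Finsupp.induction with
      | zero => exact ⟨0, by simp⟩
      | single_add i b f _ _ ih =>
        obtain ⟨a, ha⟩ := ih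
        refine ⟨b * c i + a, ?_⟩
        rw [Submodule.Quotient.mk_add, ha]
        have : (Submodule.Quotient.mk (Finsupp.single i b) :
            ((Fin s ↪ Fin t) →₀ k) ⧸ sgnCoinvRels k s t)
            = b • Submodule.Quotient.mk (Finsupp.single i 1) := by
          rw [← Submodule.Quotient.mk_smul, Finsupp.smul_single, smul_eq_mul, mul_one]
        rw [this, hmk_single i, smul_smul, add_smul]
    have he'_v : e' v = 1 := by rw [hv, he'_single, hc_e₀]
    have hinj : Function.Injective e' := by
      rw [← LinearMap.ker_eq_bot, eq_bot_iff]
      intro x hx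
      obtain ⟨a, rfl⟩ := hspan x
      simp only [LinearMap.mem_ker, map_smul, he'_v, smul_eq_mul, mul_one] at hx
      simp [hx]
    have hsurj : Function.Surjective e' := by
      intro a
      exact ⟨a • v, by simp [he'_v]⟩
    refine ⟨LinearEquiv.ofBijective e' (show Function.Bijective e' from ⟨hinj, hsurj⟩), ?_⟩
    intro τ i
    simp only [LinearEquiv.ofBijective_apply, he'_single]
    -- extend τ to a permutation of Fin t via i
    set τ' : Equiv.Perm (Fin t) := τ.viaFintypeEmbedding i with hτ'
    have htrans : τ.toEmbedding.trans i = i.trans τ'.toEmbedding := by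
      refine Function.Embedding.ext fun a => ?_
      simp only [Function.Embedding.trans_apply, Equiv.coe_toEmbedding, hτ']
      exact (Equiv.Perm.viaFintypeEmbedding_apply_image τ i a).symm
    have hsign : Equiv.Perm.sign τ' = Equiv.Perm.sign τ := by
      rw [hτ', Equiv.Perm.viaFintypeEmbedding]
      exact Equiv.Perm.sign_extendDomain τ _
    rw [htrans, hc_mul τ' i, hsign]
end

section
/- Let k be a field of characteristic zero and n ≥ 1. The k[S_{n+1}]-module k[FS({1,…,n+1},{1,…,n})] of surjections, with S_{n+1} acting by precomposition, does not contain the sign representation sgn_{n+1} as a constituent. -/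
/-- Over a field `k` of characteristic zero and for `n ≥ 1`, the `k[S_{n+1}]`-module
`k[FS({1,…,n+1},{1,…,n})]` of surjections, with `S_{n+1}` acting by precomposition
`σ · [f] = [f ∘ σ⁻¹]`, does not contain the sign representation: any vector on which every
`σ` acts by the scalar `sign σ` is zero. -/
theorem stmt12 (k : Type*) [Field k] [CharZero k] (n : ℕ) (hn : 1 ≤ n) :
    ∀ v : {f : Fin (n + 1) → Fin n // Function.Surjective f} →₀ k,
      (∀ σ : Equiv.Perm (Fin (n + 1)),
          Finsupp.mapDomain
              (fun s : {f : Fin (n + 1) → Fin n // Function.Surjective f} =>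
                (⟨s.1 ∘ ⇑σ⁻¹, s.2.comp (σ⁻¹).surjective⟩ :
                  {f : Fin (n + 1) → Fin n // Function.Surjective f})) v
            = ((Equiv.Perm.sign σ : ℤ) : k) • v) →
        v = 0 := by
  intro v h
  ext ⟨f, hf⟩
  obtain ⟨i, j, hij, hfij⟩ : ∃ i j, i ≠ j ∧ f i = f j := by
    obtain ⟨i, j, hne, heq⟩ := Fintype.exists_ne_map_eq_of_card_lt f (by simp)
    exact ⟨i, j, hne, heq⟩
  set σ := Equiv.swap i j with hσ
  have hσinv : σ⁻¹ = σ := Equiv.swap_inv i j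
  have hfσ : f ∘ ⇑σ⁻¹ = f := by
    rw [hσinv]
    funext x
    simp only [Function.comp_apply, hσ]
    rcases eq_or_ne x i with rfl | hxi
    · simp [hfij]
    rcases eq_or_ne x j with rfl | hxj
    · simp [hfij]
    · simp [Equiv.swap_apply_of_ne_of_ne hxi hxj]
  have hg : Function.Injective
      (fun s : {f : Fin (n + 1) → Fin n // Function.Surjective f} =>
        (⟨s.1 ∘ ⇑σ⁻¹, s.2.comp (σ⁻¹).surjective⟩ :
          {f : Fin (n + 1) → Fin n // Function.Surjective f})) := by
    intro a b hab
    apply Subtype.ext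
    have h1 : a.1 ∘ ⇑σ⁻¹ = b.1 ∘ ⇑σ⁻¹ := congrArg Subtype.val hab
    funext x
    simpa using congrFun h1 (σ x)
  have hfix : (⟨f ∘ ⇑σ⁻¹, hf.comp (σ⁻¹).surjective⟩ :
      {f : Fin (n + 1) → Fin n // Function.Surjective f}) = ⟨f, hf⟩ := Subtype.ext hfσ
  have h1 : (Finsupp.mapDomain
      (fun s : {f : Fin (n + 1) → Fin n // Function.Surjective f} =>
        (⟨s.1 ∘ ⇑σ⁻¹, s.2.comp (σ⁻¹).surjective⟩ :
          {f : Fin (n + 1) → Fin n // Function.Surjective f})) v) ⟨f, hf⟩ = v ⟨f, hf⟩ := by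
    conv_lhs => rw [← hfix]
    exact Finsupp.mapDomain_apply hg v ⟨f, hf⟩
  rw [h σ] at h1
  have hsign : Equiv.Perm.sign σ = -1 := Equiv.Perm.sign_swap hij
  rw [hsign] at h1
  simp only [Finsupp.smul_apply, Units.val_neg, Units.val_one, Int.cast_neg, Int.cast_one,
    neg_smul, one_smul, Finsupp.neg_apply] at h1
  have : (2 : k) * v ⟨f, hf⟩ = 0 := by linear_combination -h1
  simpa [two_ne_zero] using mul_eq_zero.mp this
end
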